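/- (Uniqueness) If two symmetric anti-bidiagonal n×n matrices with all parameters positive have the same spectrum, then they are equal. -/
import Mathlib

/-- The `n × n` symmetric anti-bidiagonal matrix built from `a 1, ..., a n`. -/
def antiBidiag (n : ℕ) (a : ℕ → ℝ) : Matrix (Fin n) (Fin n) ℝ :=
  Matrix.of fun i j =>
    if (i : ℕ) + j + 1 = n then a (n - 2 * min (i : ℕ) j)
    else if (i : ℕ) + j = n then a (n + 1 - 2 * min (i : ℕ) j)
    else 0

namespace AntiBidiagAux

open Polynomial Matrix

/-- tridiagonal matrix with diagonal `d` and off-diagonal `c`. -/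
def triMat {R : Type*} [CommRing R] (d c : ℕ → R) (n : ℕ) : Matrix (Fin n) (Fin n) R :=
  Matrix.of fun i j =>
    if (i : ℕ) = j then d i
    else if (i : ℕ) + 1 = j then c i
    else if (j : ℕ) + 1 = i then c j
    else 0

variable {R : Type*} [CommRing R]

lemma succAbove_one_val (n : ℕ) (j : Fin (n+1)) :
    (((1 : Fin (n+2)).succAbove j) : ℕ) = if (j:ℕ) = 0 then 0 else (j:ℕ)+1 := by
  simp [Fin.succAbove, Fin.lt_def]
  split_ifs <;> simp_all

lemma triMat_sub1 (d c : ℕ → R) (n : ℕ) :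
    (triMat d c (n+1)).submatrix Fin.succ Fin.succ
      = triMat (fun i => d (i+1)) (fun i => c (i+1)) n := by
  ext i j
  simp only [triMat, Matrix.submatrix_apply, Matrix.of_apply, Fin.val_succ]
  split_ifs <;> first
    | rfl
    | contradiction
    | (exfalso; omega)

lemma det_tri (d c : ℕ → R) (n : ℕ) :
    (triMat d c (n+2)).det
      = d 0 * (triMat (fun i => d (i+1)) (fun i => c (i+1)) (n+1)).det
        - c 0 * c 0 * (triMat (fun i => d (i+2)) (fun i => c (i+2)) n).det := by
  rw [Matrix.det_succ_row_zero]
  rw [Fin.sum_univ_succ, Fin.sum_univ_succ]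
  have hrest : ∀ j : Fin n,
      (-1 : R) ^ (((j.succ.succ : Fin (n+2))) : ℕ) *
        triMat d c (n+2) 0 j.succ.succ *
        ((triMat d c (n+2)).submatrix Fin.succ (j.succ.succ).succAbove).det = 0 := by
    intro j
    have h0 : triMat d c (n+2) 0 j.succ.succ = 0 := by
      simp only [triMat, Matrix.of_apply, Fin.val_succ, Fin.val_zero]
      split_ifs <;> first | rfl | contradiction | (exfalso; omega)
    rw [h0]; ring
  rw [Finset.sum_eq_zero (fun j _ => hrest j)]
  simp only [Fin.succ_zero_eq_one]
  have e00 : triMat d c (n+2) 0 0 = d 0 := by simp [triMat]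
  have e01 : triMat d c (n+2) 0 1 = c 0 := by simp [triMat]
  have hs0 : (triMat d c (n+2)).submatrix Fin.succ ((0 : Fin (n+2)).succAbove)
      = triMat (fun i => d (i+1)) (fun i => c (i+1)) (n+1) := by
    rw [Fin.succAbove_zero]
    exact triMat_sub1 d c (n+1)
  have hs1 : ((triMat d c (n+2)).submatrix Fin.succ ((1 : Fin (n+2)).succAbove)).det
      = c 0 * (triMat (fun i => d (i+2)) (fun i => c (i+2)) n).det := by
    set N := (triMat d c (n+2)).submatrix Fin.succ ((1 : Fin (n+2)).succAbove) with hN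
    rw [Matrix.det_succ_column_zero, Fin.sum_univ_succ]
    have hN00 : N 0 0 = c 0 := by
      simp only [hN, Matrix.submatrix_apply, triMat, Matrix.of_apply]
      have h1 : (((1 : Fin (n+2)).succAbove 0) : ℕ) = 0 := by
        rw [succAbove_one_val]; simp
      rw [h1]
      simp
    have hNi0 : ∀ i : Fin n, N i.succ 0 = 0 := by
      intro i
      simp only [hN, Matrix.submatrix_apply, triMat, Matrix.of_apply]
      have h1 : (((1 : Fin (n+2)).succAbove 0) : ℕ) = 0 := by
        rw [succAbove_one_val]; simp
      rw [h1, Fin.val_succ, Fin.val_succ]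
      split_ifs <;> first | rfl | contradiction | (exfalso; omega)
    have hsub : N.submatrix ((0 : Fin (n+1)).succAbove) Fin.succ
        = triMat (fun i => d (i+2)) (fun i => c (i+2)) n := by
      ext i j
      rw [Fin.succAbove_zero]
      simp only [hN, Matrix.submatrix_apply, triMat, Matrix.of_apply, Fin.val_succ]
      rw [show (((1 : Fin (n+2)).succAbove j.succ) : ℕ) = (j:ℕ)+2 by
        rw [succAbove_one_val]; simp]
      split_ifs <;> first | rfl | contradiction | (exfalso; omega)
    have hzero : ∀ i : Fin n, (-1:R) ^ ((i.succ : Fin (n+1)) : ℕ) * N i.succ 0 *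
        (N.submatrix i.succ.succAbove Fin.succ).det = 0 := by
      intro i; rw [hNi0 i]; ring
    rw [Finset.sum_eq_zero (fun i _ => hzero i), hN00, hsub]
    simp
  rw [e00, e01, hs0, hs1]
  simp only [Fin.val_zero, Fin.val_one, pow_zero, pow_one]
  ring

/-- char-det of the zero-diagonal Jacobi matrix with couplings `c 0, c 1, ...` -/
noncomputable def jacP (m : ℕ) (c : ℕ → ℝ) : Polynomial ℝ :=
  (triMat (fun _ => (X : Polynomial ℝ)) (fun i => -C (c i)) m).det

lemma jacP_zero (c : ℕ → ℝ) : jacP 0 c = 1 := Matrix.det_fin_zero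

lemma jacP_one (c : ℕ → ℝ) : jacP 1 c = X := by
  rw [jacP, Matrix.det_fin_one]
  simp [triMat]

lemma jacP_rec (m : ℕ) (c : ℕ → ℝ) :
    jacP (m+2) c = X * jacP (m+1) (fun i => c (i+1))
      - C (c 0 ^ 2) * jacP m (fun i => c (i+2)) := by
  rw [jacP, det_tri]
  rw [show (-C (c 0)) * (-C (c 0)) = C (c 0 ^ 2) by rw [neg_mul_neg, ← C_mul, sq]]
  rfl

lemma jacP_coeff_zero (m : ℕ) (c : ℕ → ℝ) (j : ℕ) (h : m < j ∨ j % 2 ≠ m % 2) :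
    (jacP m c).coeff j = 0 := by
  induction m using Nat.twoStepInduction generalizing c j with
  | zero =>
    rw [jacP_zero]
    have : j ≠ 0 := by omega
    simp [coeff_one, this]
  | one =>
    rw [jacP_one, coeff_X]
    have : 1 ≠ j := by omega
    simp [this]
  | more m ih1 ih2 =>
    rw [jacP_rec, coeff_sub, coeff_C_mul]
    rw [ih1 _ j (by omega)]
    rcases j with _ | j'
    · rw [mul_coeff_zero, coeff_X_zero]
      ring
    · rw [coeff_X_mul, ih2 _ j' (by omega)]
      ring

lemma jacP_coeff_self (m : ℕ) (c : ℕ → ℝ) : (jacP m c).coeff m = 1 := by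
  induction m using Nat.twoStepInduction generalizing c with
  | zero => rw [jacP_zero]; simp
  | one => rw [jacP_one]; simp
  | more m ih1 ih2 =>
    rw [jacP_rec, coeff_sub, coeff_C_mul, coeff_X_mul, ih2,
      jacP_coeff_zero m _ (m+2) (by omega)]
    ring

lemma jacP_X_coeff (k : ℕ) (c : ℕ → ℝ) (j : ℕ) (h : j % 2 = k % 2) :
    (X * jacP k c).coeff j = 0 := by
  rcases j with _ | j'
  · rw [mul_coeff_zero, coeff_X_zero, zero_mul]
  · rw [coeff_X_mul, jacP_coeff_zero k c j' (by omega)]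

/-- uniqueness downward induction -/
lemma jacP_inj (m : ℕ) (c c' : ℕ → ℝ)
    (hc : ∀ i, i < m → 0 < c i) (hc' : ∀ i, i < m → 0 < c' i)
    (h1 : jacP (m+1) c = jacP (m+1) c')
    (h2 : jacP m (fun i => c (i+1)) = jacP m (fun i => c' (i+1))) :
    ∀ i, i < m → c i = c' i := by
  induction m generalizing c c' with
  | zero => intro i hi; omega
  | succ m ih =>
    have key : C (c 0 ^ 2) * jacP m (fun i => c (i+2))
        = C (c' 0 ^ 2) * jacP m (fun i => c' (i+2)) := by
      have e : X * jacP (m+1) (fun i => c (i+1)) - C (c 0 ^ 2) * jacP m (fun i => c (i+2))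
          = X * jacP (m+1) (fun i => c' (i+1)) - C (c' 0 ^ 2) * jacP m (fun i => c' (i+2)) := by
        rw [← jacP_rec, ← jacP_rec]; exact h1
      linear_combination (X : Polynomial ℝ) * h2 - e
    have hlead : c 0 ^ 2 = c' 0 ^ 2 := by
      have h3 := congrArg (fun p => Polynomial.coeff p m) key
      simp only [coeff_C_mul, jacP_coeff_self, mul_one] at h3
      exact h3
    have hc00 : c 0 = c' 0 := by
      have h0 := hc 0 (by omega); have h0' := hc' 0 (by omega)
      nlinarith [sq_nonneg (c 0 - c' 0), sq_nonneg (c 0 + c' 0)]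
    have hQ : jacP m (fun i => c (i+2)) = jacP m (fun i => c' (i+2)) := by
      have hne : (C (c 0 ^ 2)) ≠ 0 := by
        simp only [ne_eq, C_eq_zero]
        have := hc 0 (by omega); positivity
      apply mul_left_cancel₀ hne
      rw [key, hc00]
    intro i hi
    rcases Nat.eq_zero_or_pos i with rfl | hipos
    · exact hc00
    · obtain ⟨i', rfl⟩ : ∃ i', i = i' + 1 := ⟨i - 1, by omega⟩
      exact ih (fun i => c (i+1)) (fun i => c' (i+1))
        (fun i hi => hc (i+1) (by omega)) (fun i hi => hc' (i+1) (by omega))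
        h2 hQ i' (by omega)

def sigVal (n k : ℕ) : ℕ :=
  if (n-1-k) % 2 = 0 then (n-1-k)/2 else n-1-(n-1-k)/2

lemma sigVal_spec (n k : ℕ) (hk : k < n) :
    sigVal n k < n ∧ (2 * sigVal n k + k + 1 = n ∨ 2 * sigVal n k = n + k) := by
  unfold sigVal
  split_ifs <;> omega

noncomputable def sigEquiv (n : ℕ) : Fin n ≃ Fin n :=
  Equiv.ofBijective (fun k => ⟨sigVal n k, (sigVal_spec n k k.isLt).1⟩)
    ((Finite.injective_iff_bijective).mp (by
      intro k1 k2 h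
      have h1 := (sigVal_spec n k1 k1.isLt).2
      have h2 := (sigVal_spec n k2 k2.isLt).2
      have hv : sigVal n k1 = sigVal n k2 := congrArg Fin.val h
      have hk1 := k1.isLt
      have hk2 := k2.isLt
      exact Fin.ext (by omega)))

lemma entry_corr (n : ℕ) (a : ℕ → ℝ) (i j : Fin n) :
    antiBidiag n a (sigEquiv n i) (sigEquiv n j)
      = triMat (fun i => if i = 0 then a 1 else 0) (fun i => a (i+2)) n i j := by
  have hi := sigVal_spec n i i.isLt
  have hj := sigVal_spec n j j.isLt
  have hvi : ((sigEquiv n i : Fin n) : ℕ) = sigVal n i := rfl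
  have hvj : ((sigEquiv n j : Fin n) : ℕ) = sigVal n j := rfl
  simp only [antiBidiag, triMat, Matrix.of_apply, hvi, hvj]
  have hii := i.isLt
  have hjj := j.isLt
  split_ifs <;> first
    | rfl
    | (exfalso; omega)
    | (exact congrArg a (by omega))

lemma charmatrix_triMat (d c : ℕ → ℝ) (n : ℕ) :
    charmatrix (triMat d c n)
      = triMat (fun i => (X : Polynomial ℝ) - C (d i)) (fun i => -C (c i)) n := by
  ext i j
  by_cases hij : i = j
  · subst hij
    rw [charmatrix_apply_eq]
    simp [triMat]
  · rw [charmatrix_apply_ne _ _ _ hij]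
    have hv : (i:ℕ) ≠ (j:ℕ) := fun h => hij (Fin.ext h)
    simp only [triMat, Matrix.of_apply, if_neg hv]
    split_ifs <;> simp

lemma cp_formula (m : ℕ) (a : ℕ → ℝ) :
    (antiBidiag (m+2) a).charpoly
      = X * jacP (m+1) (fun i => a (i+3))
        - C (a 1) * jacP (m+1) (fun i => a (i+3))
        - C (a 2 ^ 2) * jacP m (fun i => a (i+4)) := by
  have hre : triMat (fun i => if i = 0 then a 1 else 0) (fun i => a (i+2)) (m+2)
      = (Matrix.reindex (sigEquiv (m+2)).symm (sigEquiv (m+2)).symm) (antiBidiag (m+2) a) := by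
    rw [Matrix.reindex_apply]
    ext i j
    simp only [Matrix.submatrix_apply, Equiv.symm_symm]
    exact (entry_corr (m+2) a i j).symm
  have hcp : (antiBidiag (m+2) a).charpoly
      = (triMat (fun i => if i = 0 then a 1 else 0) (fun i => a (i+2)) (m+2)).charpoly := by
    rw [hre, Matrix.charpoly_reindex]
  rw [hcp, Matrix.charpoly, charmatrix_triMat, det_tri]
  have hd1 : (fun i => (X : Polynomial ℝ) - C (if i + 1 = 0 then a 1 else 0))
      = (fun _ : ℕ => (X : Polynomial ℝ)) := by
    funext i; simp
  have hd2 : (fun i => (X : Polynomial ℝ) - C (if i + 2 = 0 then a 1 else 0))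
      = (fun _ : ℕ => (X : Polynomial ℝ)) := by
    funext i; simp
  rw [hd1, hd2]
  have h0 : ((X : Polynomial ℝ) - C (if 0 = 0 then a 1 else 0)) = X - C (a 1) := by simp
  rw [h0]
  rw [show (-C (a (0+2))) * (-C (a (0+2))) = C (a 2 ^ 2) by
    rw [neg_mul_neg, ← C_mul, sq]]
  rw [sub_mul]
  rfl

end AntiBidiagAux

open Polynomial AntiBidiagAux in
/-- Two symmetric anti-bidiagonal matrices with positive parameters having the
same spectrum (with multiplicity, i.e. the same characteristic polynomial)
coincide. -/
theorem stmt_15 (n : ℕ) (a b : ℕ → ℝ)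
    (ha : ∀ i, 1 ≤ i → i ≤ n → 0 < a i)
    (hb : ∀ i, 1 ≤ i → i ≤ n → 0 < b i)
    (hspec : (antiBidiag n a).charpoly = (antiBidiag n b).charpoly) :
    antiBidiag n a = antiBidiag n b := by
  have key : ∀ i, 1 ≤ i → i ≤ n → a i = b i := by
    match n, ha, hb, hspec with
    | 0, ha, hb, hspec => intro i h1 h2; omega
    | 1, ha, hb, hspec =>
      have cp : ∀ c : ℕ → ℝ, (antiBidiag 1 c).charpoly = X - C (c 1) := by
        intro c
        have e : antiBidiag 1 c 0 0 = c 1 := by simp [antiBidiag]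
        rw [Matrix.charpoly, Matrix.det_fin_one, Matrix.charmatrix_apply_eq, e]
      rw [cp a, cp b] at hspec
      have h1 : a 1 = b 1 := by
        have := congrArg (fun p => Polynomial.coeff p 0) hspec
        simpa using this
      intro i hi1 hi2
      have : i = 1 := by omega
      rw [this]; exact h1
    | (m+2), ha, hb, hspec =>
      set n := m + 2 with hn
      rw [cp_formula m a, cp_formula m b] at hspec
      set Pa := jacP (m+1) (fun i => a (i+3)) with hPadef
      set Pb := jacP (m+1) (fun i => b (i+3)) with hPbdef
      set Qa := jacP m (fun i => a (i+4)) with hQadef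
      set Qb := jacP m (fun i => b (i+4)) with hQbdef
      have ha1 : 0 < a 1 := ha 1 (by omega) (by omega)
      have hb1 : 0 < b 1 := hb 1 (by omega) (by omega)
      have ha2 : 0 < a 2 := ha 2 (by omega) (by omega)
      have hb2 : 0 < b 2 := hb 2 (by omega) (by omega)
      have hcoeff : ∀ j, (X * Pa).coeff j - a 1 * Pa.coeff j - a 2 ^ 2 * Qa.coeff j
          = (X * Pb).coeff j - b 1 * Pb.coeff j - b 2 ^ 2 * Qb.coeff j := by
        intro j
        have h := congrArg (fun p => Polynomial.coeff p j) hspec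
        simpa only [coeff_sub, coeff_C_mul] using h
      have E1 : C (a 1) * Pa = C (b 1) * Pb := by
        apply Polynomial.ext
        intro j
        rw [coeff_C_mul, coeff_C_mul]
        by_cases hp : j % 2 = (m+1) % 2
        · have h := hcoeff j
          rw [hPadef, hPbdef, hQadef, hQbdef] at h
          rw [jacP_X_coeff (m+1) _ j hp, jacP_X_coeff (m+1) _ j hp,
            jacP_coeff_zero m _ j (by omega), jacP_coeff_zero m _ j (by omega)] at h
          rw [hPadef, hPbdef]
          linarith
        · rw [hPadef, hPbdef,
            jacP_coeff_zero (m+1) _ j (by omega), jacP_coeff_zero (m+1) _ j (by omega)]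
          ring
      have hab1 : a 1 = b 1 := by
        have h := congrArg (fun p => Polynomial.coeff p (m+1)) E1
        simp only [coeff_C_mul, hPadef, hPbdef, jacP_coeff_self, mul_one] at h
        exact h
      have hPab : Pa = Pb := by
        apply mul_left_cancel₀ (show (C (a 1) : Polynomial ℝ) ≠ 0 by
          simp only [ne_eq, C_eq_zero]; positivity)
        rw [E1, hab1]
      have E2 : C (a 2 ^ 2) * Qa = C (b 2 ^ 2) * Qb := by
        have hC1 : (C (a 1) : Polynomial ℝ) = C (b 1) := by rw [hab1]
        rw [hPab, hC1] at hspec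
        linear_combination -hspec
      have hab2 : a 2 = b 2 := by
        have h := congrArg (fun p => Polynomial.coeff p m) E2
        simp only [coeff_C_mul, hQadef, hQbdef, jacP_coeff_self, mul_one] at h
        nlinarith
      have hQab : Qa = Qb := by
        apply mul_left_cancel₀ (show (C (a 2 ^ 2) : Polynomial ℝ) ≠ 0 by
          simp only [ne_eq, C_eq_zero]; positivity)
        rw [E2, hab2]
      have hrest := jacP_inj m (fun i => a (i+3)) (fun i => b (i+3))
        (fun i hi => ha (i+3) (by omega) (by omega))
        (fun i hi => hb (i+3) (by omega) (by omega))
        hPab hQab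
      intro i hi1 hi2
      match i, hi1 with
      | 1, _ => exact hab1
      | 2, _ => exact hab2
      | (i'+3), _ => exact hrest i' (by omega)
  ext i j
  simp only [antiBidiag, Matrix.of_apply]
  have hii := i.isLt
  have hjj := j.isLt
  split_ifs with h1 h2
  · exact key _ (by omega) (by omega)
  · exact key _ (by omega) (by omega)
  · rfl
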